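/- Let D be a unital associative ℂ-algebra, C ⊆ D a unital subalgebra, n ≥ 0, and let φ : D^{n+1} → ℂ be a multilinear map. Define the Hochschild coboundary (bφ)(a₀,…,a_{n+1}) = ∑_{j=0}^{n} (-1)^j φ(a₀,…,a_j·a_{j+1},…,a_{n+1}) + (-1)^{n+1} φ(a_{n+1}·a₀, a₁,…,a_n). Assume φ is C-constant, i.e. φ(a₀,…,a_n) = 0 whenever some a_j with j ≥ 1 lies in C, and (bφ)(a₀,…,a_{n+1}) = 0 whenever some a_j with j ≥ 1 lies in C. Then for every u ∈ C which is invertible with u⁻¹ ∈ C, and all a₀,…,a_n ∈ D: φ(u a₀ u⁻¹, u a₁ u⁻¹, …, u a_n u⁻¹) = φ(a₀,…,a_n). -/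

import Mathlib

section AuxStmt12

variable {D : Type*} [Ring D] [Algebra ℂ D] (C : Subalgebra ℂ D) (n : ℕ)
    (φ : MultilinearMap ℂ (fun _ : Fin (n + 1) => D) ℂ)
    (bφ : (Fin (n + 2) → D) → ℂ)

/-- Auxiliary family of tuples used in the conjugation-invariance chain. -/
def auxG12 (a : Fin (n + 1) → D) (u v : D) (m : ℕ) : Fin (n + 1) → D :=
  fun i => if (i : ℕ) < m then a i
    else if (i : ℕ) = m then a i * v
    else if (i : ℕ) = n then u * a i
    else u * a i * v

private theorem signcancel12 : ∀ (m : ℕ) (x y : ℂ),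
    (-1:ℂ)^m * x + (-1:ℂ)^(m+1) * y = 0 → x = y := by
  intro m x y h
  have h1 : (-1:ℂ)^m ≠ 0 := pow_ne_zero _ (by norm_num)
  refine mul_left_cancel₀ h1 ?_
  rw [pow_succ] at h
  linear_combination h

theorem cyc_lemma12
    (hb : ∀ a : Fin (n + 2) → D,
      bφ a = (∑ j : Fin (n + 1), (-1 : ℂ) ^ (j : ℕ) *
          φ (fun i : Fin (n + 1) =>
            if (i : ℕ) < (j : ℕ) then a i.castSucc
            else if (i : ℕ) = (j : ℕ) then a i.castSucc * a i.succ
            else a i.succ))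
        + (-1 : ℂ) ^ (n + 1) *
          φ (fun i : Fin (n + 1) =>
            if (i : ℕ) = 0 then a (Fin.last (n + 1)) * a 0 else a i.castSucc))
    (hφC : ∀ (a : Fin (n + 1) → D) (j : Fin (n + 1)), j ≠ 0 → a j ∈ C → φ a = 0)
    (hbC : ∀ (a : Fin (n + 2) → D) (j : Fin (n + 2)), j ≠ 0 → a j ∈ C → bφ a = 0)
    (c : D) (hc : c ∈ C) (b : Fin (n + 1) → D) :
    φ (fun i => if (i : ℕ) = n then b i * c else b i)
      = φ (fun i => if (i : ℕ) = 0 then c * b i else b i) := by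
  set A : Fin (n+2) → D := fun i => if h : (i:ℕ) < n+1 then b ⟨(i:ℕ), h⟩ else c with hA
  have hAc : ∀ i : Fin (n+1), A i.castSucc = b i := by
    intro i
    simp only [hA]
    rw [dif_pos (by simpa using i.isLt)]
    exact congrArg b (Fin.ext (by simp))
  have hAs : ∀ i : Fin (n+1), (i:ℕ) = n → A i.succ = c := by
    intro i hi
    simp only [hA]
    rw [dif_neg (by simp [hi])]
  have hAl : A (Fin.last (n+1)) = c := by
    simp only [hA]
    rw [dif_neg (by simp)]
  have h0 := hbC A (Fin.last (n+1)) (by simp [Fin.ext_iff]) (by rw [hAl]; exact hc)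
  rw [hb A] at h0
  rw [Finset.sum_eq_single (Fin.last n)] at h0
  · simp only [Fin.val_last] at h0
    have e1 : (fun i : Fin (n+1) =>
        if (i : ℕ) < n then A i.castSucc
        else if (i : ℕ) = n then A i.castSucc * A i.succ
        else A i.succ) = fun i : Fin (n+1) => if (i : ℕ) = n then b i * c else b i := by
      funext i
      rcases lt_or_eq_of_le (Nat.lt_succ_iff.mp i.isLt) with h | h
      · rw [if_pos h, if_neg (by omega), hAc]
      · rw [if_neg (by omega), if_pos h, if_pos h, hAc, hAs i h]
    have e2 : (fun i : Fin (n+1) =>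
        if (i : ℕ) = 0 then A (Fin.last (n + 1)) * A 0 else A i.castSucc)
        = fun i : Fin (n+1) => if (i : ℕ) = 0 then c * b i else b i := by
      funext i
      by_cases h : (i:ℕ) = 0
      · have hi0 : i = 0 := Fin.ext h
        rw [if_pos h, if_pos h, hAl, hi0]
        congr 1
      · rw [if_neg h, if_neg h, hAc]
    rw [e1, e2] at h0
    exact signcancel12 n _ _ h0
  · intro j _ hj
    have hjn : (j:ℕ) < n := by
      have := Nat.lt_succ_iff.mp j.isLt
      rcases lt_or_eq_of_le this with h | h
      · exact h
      · exact absurd (Fin.ext h) hj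
    rw [hφC _ (Fin.last n) (by simp [Fin.ext_iff]; omega) ?_, mul_zero]
    simp only [Fin.val_last]
    rw [if_neg (by omega), if_neg (by omega), Fin.succ_last, hAl]
    exact hc
  · intro h
    exact absurd (Finset.mem_univ _) h

theorem swap_lemma12
    (hb : ∀ a : Fin (n + 2) → D,
      bφ a = (∑ j : Fin (n + 1), (-1 : ℂ) ^ (j : ℕ) *
          φ (fun i : Fin (n + 1) =>
            if (i : ℕ) < (j : ℕ) then a i.castSucc
            else if (i : ℕ) = (j : ℕ) then a i.castSucc * a i.succ
            else a i.succ))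
        + (-1 : ℂ) ^ (n + 1) *
          φ (fun i : Fin (n + 1) =>
            if (i : ℕ) = 0 then a (Fin.last (n + 1)) * a 0 else a i.castSucc))
    (hφC : ∀ (a : Fin (n + 1) → D) (j : Fin (n + 1)), j ≠ 0 → a j ∈ C → φ a = 0)
    (hbC : ∀ (a : Fin (n + 2) → D) (j : Fin (n + 2)), j ≠ 0 → a j ∈ C → bφ a = 0)
    (c : D) (hc : c ∈ C) (k : ℕ) (hk : k + 1 ≤ n) (b : Fin (n + 1) → D) :
    φ (fun i => if (i : ℕ) = k then b i * c else b i)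
      = φ (fun i => if (i : ℕ) = k + 1 then c * b i else b i) := by
  set A : Fin (n+2) → D := fun i =>
    if h1 : (i:ℕ) < k + 1 then b ⟨(i:ℕ), by omega⟩
    else if (i:ℕ) = k + 1 then c
    else b ⟨(i:ℕ) - 1, by have := i.isLt; omega⟩ with hA
  have hAlow : ∀ i : Fin (n+1), ∀ _h : (i:ℕ) ≤ k, A i.castSucc = b i := by
    intro i h
    simp only [hA]
    rw [dif_pos (show ((i.castSucc : Fin (n+2)) : ℕ) < k + 1 by simp; omega)]
    exact congrArg b (Fin.ext (by simp))
  have hAmidc : ∀ i : Fin (n+1), ∀ _h : (i:ℕ) = k + 1, A i.castSucc = c := by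
    intro i h
    simp only [hA]
    rw [dif_neg (by simp [h]), if_pos (by simp [h])]
  have hAsk : ∀ i : Fin (n+1), ∀ _h : (i:ℕ) = k, A i.succ = c := by
    intro i h
    simp only [hA]
    rw [dif_neg (by simp [h]), if_pos (by simp [h])]
  have hAshigh : ∀ i : Fin (n+1), ∀ _h : k + 1 ≤ (i:ℕ), A i.succ = b i := by
    intro i h
    simp only [hA]
    rw [dif_neg (by simp; omega), if_neg (by simp; omega)]
    exact congrArg b (Fin.ext (by simp))
  have hAk1 : A ⟨k+1, by omega⟩ = c := by
    simp only [hA]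
    rw [dif_neg (by simp)]
    simp
  have h0 := hbC A ⟨k+1, by omega⟩ (by simp [Fin.ext_iff]) (by rw [hAk1]; exact hc)
  rw [hb A] at h0
  rw [Finset.sum_eq_add (⟨k, by omega⟩ : Fin (n+1)) (⟨k+1, by omega⟩ : Fin (n+1))
      (by simp [Fin.ext_iff])] at h0
  · -- cyclic term vanishes
    rw [hφC (fun i : Fin (n+1) =>
        if (i : ℕ) = 0 then A (Fin.last (n + 1)) * A 0 else A i.castSucc)
        ⟨k+1, by omega⟩ (by simp [Fin.ext_iff]) ?_, mul_zero, add_zero] at h0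
    · simp only [Fin.val_mk] at h0
      have e1 : (fun i : Fin (n+1) =>
          if (i : ℕ) < k then A i.castSucc
          else if (i : ℕ) = k then A i.castSucc * A i.succ
          else A i.succ) = fun i : Fin (n+1) => if (i : ℕ) = k then b i * c else b i := by
        funext i
        rcases Nat.lt_trichotomy (i:ℕ) k with h | h | h
        · rw [if_pos h, if_neg (by omega), hAlow i (by omega)]
        · rw [if_neg (by omega), if_pos h, if_pos h, hAlow i (by omega), hAsk i h]
        · rw [if_neg (by omega), if_neg (by omega), if_neg (by omega), hAshigh i (by omega)]
      have e2 : (fun i : Fin (n+1) =>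
          if (i : ℕ) < k + 1 then A i.castSucc
          else if (i : ℕ) = k + 1 then A i.castSucc * A i.succ
          else A i.succ) = fun i : Fin (n+1) => if (i : ℕ) = k + 1 then c * b i else b i := by
        funext i
        rcases Nat.lt_trichotomy (i:ℕ) (k+1) with h | h | h
        · rw [if_pos h, if_neg (by omega), hAlow i (by omega)]
        · rw [if_neg (by omega), if_pos h, if_pos h, hAmidc i h, hAshigh i (by omega)]
        · rw [if_neg (by omega), if_neg (by omega), if_neg (by omega), hAshigh i (by omega)]
      rw [e1, e2] at h0
      exact signcancel12 k _ _ h0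
    · simp only []
      rw [if_neg (by omega)]
      have : ((⟨k+1, by omega⟩ : Fin (n+1)).castSucc : Fin (n+2)) = ⟨k+1, by omega⟩ :=
        Fin.ext (by simp)
      rw [this, hAk1]
      exact hc
  · intro j _ hj
    rcases Nat.lt_trichotomy (j:ℕ) k with h | h | h
    · rw [hφC _ (⟨k, by omega⟩ : Fin (n+1)) (by simp [Fin.ext_iff]; omega) ?_, mul_zero]
      simp only [Fin.val_mk]
      rw [if_neg (by omega), if_neg (by omega)]
      rw [hAsk _ rfl]
      exact hc
    · exact absurd (Fin.ext h) hj.1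
    · rcases Nat.lt_or_ge (j:ℕ) (k+2) with h2 | h2
      · have : (j:ℕ) = k + 1 := by omega
        exact absurd (Fin.ext this) hj.2
      · rw [hφC _ (⟨k+1, by omega⟩ : Fin (n+1)) (by simp [Fin.ext_iff]) ?_, mul_zero]
        simp only [Fin.val_mk]
        rw [if_pos (by omega)]
        rw [hAmidc _ rfl]
        exact hc
  · intro h; exact absurd (Finset.mem_univ _) h
  · intro h; exact absurd (Finset.mem_univ _) h

end AuxStmt12

/-- Let `D` be a unital ℂ-algebra, `C ⊆ D` a unital subalgebra,
`φ : D^{n+1} → ℂ` a multilinear map and `bφ` its Hochschild coboundary.  If `φ` is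
`C`-constant (both `φ` and `bφ` vanish whenever one of the arguments `a_j`, `j ≥ 1`,
lies in `C`), then `φ` is invariant under conjugation by any `u ∈ C` which is invertible
with inverse `v = u⁻¹ ∈ C`. -/
theorem stmt_12 (D : Type*) [Ring D] [Algebra ℂ D] (C : Subalgebra ℂ D) (n : ℕ)
    (φ : MultilinearMap ℂ (fun _ : Fin (n + 1) => D) ℂ)
    (bφ : (Fin (n + 2) → D) → ℂ)
    (hb : ∀ a : Fin (n + 2) → D,
      bφ a = (∑ j : Fin (n + 1), (-1 : ℂ) ^ (j : ℕ) *
          φ (fun i : Fin (n + 1) =>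
            if (i : ℕ) < (j : ℕ) then a i.castSucc
            else if (i : ℕ) = (j : ℕ) then a i.castSucc * a i.succ
            else a i.succ))
        + (-1 : ℂ) ^ (n + 1) *
          φ (fun i : Fin (n + 1) =>
            if (i : ℕ) = 0 then a (Fin.last (n + 1)) * a 0 else a i.castSucc))
    (hφC : ∀ (a : Fin (n + 1) → D) (j : Fin (n + 1)), j ≠ 0 → a j ∈ C → φ a = 0)
    (hbC : ∀ (a : Fin (n + 2) → D) (j : Fin (n + 2)), j ≠ 0 → a j ∈ C → bφ a = 0)
    (u v : D) (hu : u ∈ C) (hv : v ∈ C) (huv : u * v = 1) (hvu : v * u = 1)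
    (a : Fin (n + 1) → D) :
    φ (fun i => u * a i * v) = φ a := by
  by_cases hn : n = 0
  · subst hn
    have h1 := cyc_lemma12 C 0 φ bφ hb hφC hbC v hv (fun i => u * a i)
    have eL : (fun i : Fin 1 => if (i:ℕ) = 0 then (u * a i) * v else u * a i)
        = fun i => u * a i * v := by
      funext i
      rw [if_pos (Fin.val_eq_zero i)]
    have eR : (fun i : Fin 1 => if (i:ℕ) = 0 then v * (u * a i) else u * a i) = a := by
      funext i
      rw [if_pos (Fin.val_eq_zero i), ← mul_assoc, hvu, one_mul]
    rw [eL, eR] at h1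
    exact h1
  · -- n ≥ 1
    have step_start : φ (fun i => u * a i * v) = φ (auxG12 n a u v 0) := by
      have s1 := cyc_lemma12 C n φ bφ hb hφC hbC v hv
        (fun i => if (i:ℕ) = n then u * a i else u * a i * v)
      have eL : (fun i : Fin (n+1) => if (i:ℕ) = n then
            (if (i:ℕ) = n then u * a i else u * a i * v) * v
          else (if (i:ℕ) = n then u * a i else u * a i * v))
          = fun i => u * a i * v := by
        funext i
        by_cases h : (i:ℕ) = n <;> simp [h]
      have eR : (fun i : Fin (n+1) => if (i:ℕ) = 0 then
            v * (if (i:ℕ) = n then u * a i else u * a i * v)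
          else (if (i:ℕ) = n then u * a i else u * a i * v))
          = auxG12 n a u v 0 := by
        funext i
        simp only [auxG12]
        by_cases h : (i:ℕ) = 0
        · rw [if_pos h, if_neg (show ¬(i:ℕ) = n by omega),
            if_neg (show ¬(i:ℕ) < 0 by omega), if_pos h,
            ← mul_assoc, ← mul_assoc, hvu, one_mul]
        · rw [if_neg h, if_neg (show ¬(i:ℕ) < 0 by omega), if_neg h]
      rw [eL, eR] at s1
      exact s1
    have step_mid : ∀ m : ℕ, m + 1 < n →
        φ (auxG12 n a u v m) = φ (auxG12 n a u v (m+1)) := by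
      intro m hm
      have s1 := swap_lemma12 C n φ bφ hb hφC hbC v hv m (by omega)
        (fun i => if (i:ℕ) ≤ m then a i
          else if (i:ℕ) = n then u * a i else u * a i * v)
      have eL : (fun i : Fin (n+1) => if (i:ℕ) = m then
            (if (i:ℕ) ≤ m then a i else if (i:ℕ) = n then u * a i else u * a i * v) * v
          else (if (i:ℕ) ≤ m then a i else if (i:ℕ) = n then u * a i else u * a i * v))
          = auxG12 n a u v m := by
        funext i
        simp only [auxG12]
        rcases Nat.lt_trichotomy (i:ℕ) m with h | h | h
        · rw [if_neg (show ¬(i:ℕ) = m by omega), if_pos (show (i:ℕ) ≤ m by omega),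
            if_pos h]
        · rw [if_pos h, if_pos (show (i:ℕ) ≤ m by omega),
            if_neg (show ¬(i:ℕ) < m by omega), if_pos h]
        · rw [if_neg (show ¬(i:ℕ) = m by omega), if_neg (show ¬(i:ℕ) ≤ m by omega),
            if_neg (show ¬(i:ℕ) < m by omega), if_neg (show ¬(i:ℕ) = m by omega)]
      have eR : (fun i : Fin (n+1) => if (i:ℕ) = m + 1 then
            v * (if (i:ℕ) ≤ m then a i else if (i:ℕ) = n then u * a i else u * a i * v)
          else (if (i:ℕ) ≤ m then a i else if (i:ℕ) = n then u * a i else u * a i * v))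
          = auxG12 n a u v (m+1) := by
        funext i
        simp only [auxG12]
        rcases Nat.lt_trichotomy (i:ℕ) (m+1) with h | h | h
        · rw [if_neg (show ¬(i:ℕ) = m + 1 by omega), if_pos (show (i:ℕ) ≤ m by omega),
            if_pos h]
        · rw [if_pos h, if_neg (show ¬(i:ℕ) ≤ m by omega),
            if_neg (show ¬(i:ℕ) = n by omega), if_neg (show ¬(i:ℕ) < m + 1 by omega),
            if_pos h, ← mul_assoc, ← mul_assoc, hvu, one_mul]
        · rw [if_neg (show ¬(i:ℕ) = m + 1 by omega), if_neg (show ¬(i:ℕ) ≤ m by omega),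
            if_neg (show ¬(i:ℕ) < m + 1 by omega),
            if_neg (show ¬(i:ℕ) = m + 1 by omega)]
      rw [eL, eR] at s1
      exact s1
    have step_fin : φ (auxG12 n a u v (n-1)) = φ a := by
      have s1 := swap_lemma12 C n φ bφ hb hφC hbC v hv (n-1) (by omega)
        (fun i => if (i:ℕ) ≤ n - 1 then a i else u * a i)
      have eL : (fun i : Fin (n+1) => if (i:ℕ) = n - 1 then
            (if (i:ℕ) ≤ n - 1 then a i else u * a i) * v
          else (if (i:ℕ) ≤ n - 1 then a i else u * a i))
          = auxG12 n a u v (n-1) := by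
        funext i
        simp only [auxG12]
        rcases Nat.lt_trichotomy (i:ℕ) (n-1) with h | h | h
        · rw [if_neg (show ¬(i:ℕ) = n - 1 by omega), if_pos (show (i:ℕ) ≤ n - 1 by omega),
            if_pos h]
        · rw [if_pos h, if_pos (show (i:ℕ) ≤ n - 1 by omega),
            if_neg (show ¬(i:ℕ) < n - 1 by omega), if_pos h]
        · have hi : (i:ℕ) = n := by have := i.isLt; omega
          rw [if_neg (show ¬(i:ℕ) = n - 1 by omega), if_neg (show ¬(i:ℕ) ≤ n - 1 by omega),
            if_neg (show ¬(i:ℕ) < n - 1 by omega), if_pos hi,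
            if_neg (show ¬(i:ℕ) = n - 1 by omega)]
      have eR : (fun i : Fin (n+1) => if (i:ℕ) = (n-1) + 1 then
            v * (if (i:ℕ) ≤ n - 1 then a i else u * a i)
          else (if (i:ℕ) ≤ n - 1 then a i else u * a i)) = a := by
        funext i
        by_cases h : (i:ℕ) = (n-1) + 1
        · rw [if_pos h, if_neg (show ¬(i:ℕ) ≤ n - 1 by omega), ← mul_assoc, hvu, one_mul]
        · rw [if_neg h, if_pos (show (i:ℕ) ≤ n - 1 by have := i.isLt; omega)]
      rw [eL, eR] at s1
      exact s1
    have chain : ∀ d m : ℕ, m + d = n - 1 → φ (auxG12 n a u v m) = φ a := by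
      intro d
      induction d with
      | zero =>
        intro m hm
        rw [show m = n - 1 by omega]
        exact step_fin
      | succ d ih =>
        intro m hm
        calc φ (auxG12 n a u v m) = φ (auxG12 n a u v (m+1)) := step_mid m (by omega)
          _ = φ a := ih (m+1) (by omega)
    rw [step_start]
    exact chain (n-1) 0 (by omega)
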